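/- Let H be a 2-connected graph, let e = uv be an edge of H, and let H⁻ = H − e. For every k ≥ 2, the graph C_k(H⁻) obtained from k pairwise disjoint copies H⁻_1, ..., H⁻_k of H⁻ by identifying, for each 1 ≤ i ≤ k−1, the copy of v in H⁻_i with the copy of u in H⁻_{i+1}, and additionally identifying the copy of v in H⁻_k with the copy of u in H⁻_1, contains H as a minor. -/

import Mathlib

open SimpleGraph

variable {α β : Type*}

/-- A model of `H` in `G`: a family of pairwise disjoint nonempty vertex subsets of `G`,
each inducing a connected subgraph, such that for every edge `h h'` of `H` there is an
edge of `G` between `V h` and `V h'`. -/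
def IsMinorModel (G : SimpleGraph α) (H : SimpleGraph β) (V : β → Set α) : Prop :=
  (∀ h, (V h).Nonempty) ∧
  (Pairwise fun h h' => Disjoint (V h) (V h')) ∧
  (∀ h, (G.induce (V h)).Connected) ∧
  ∀ h h', H.Adj h h' → ∃ x ∈ V h, ∃ y ∈ V h', G.Adj x y

/-- `H` is a minor of `G`. -/
def HasMinor (G : SimpleGraph α) (H : SimpleGraph β) : Prop :=
  ∃ V : β → Set α, IsMinorModel G H V

/-- `G` is `H`-minimal: `H` is a minor of `G`, but for every vertex `x` of `G`,
`H` is not a minor of `G − x`. -/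
def MinorMinimal (G : SimpleGraph α) (H : SimpleGraph β) : Prop :=
  HasMinor G H ∧ ∀ x : α, ¬ HasMinor (G.induce {y | y ≠ x}) H

/-- A graph is 2-connected if it has at least 3 vertices, is connected, and stays
connected after deleting any single vertex. -/
def TwoConnected [Fintype α] (G : SimpleGraph α) : Prop :=
  3 ≤ Fintype.card α ∧ G.Connected ∧ ∀ v : α, (G.induce {w | w ≠ v}).Connected

/-- `G` is a cycle: connected and 2-regular. -/
def IsCycleGraph (G : SimpleGraph α) : Prop :=
  G.Connected ∧ ∀ v : α, (G.neighborSet v).ncard = 2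

/-- The graph `C_k(H⁻)` obtained from `k` disjoint copies of `H⁻ = H − uv` by
identifying, cyclically, the copy of `v` in the `i`-th copy with the copy of `u` in
the `(i+1 mod k)`-th copy.  A vertex `(i, a)` (with `a ≠ v`) is the vertex `a` of the
`i`-th copy, so `(i + 1 mod k, u)` is also the vertex `v` of the `i`-th copy. -/
def cycleOfCopies (H : SimpleGraph α) (u v : α) (k : ℕ) :
    SimpleGraph (Fin k × {a : α // a ≠ v}) :=
  SimpleGraph.fromRel fun x y =>
    (x.1 = y.1 ∧ (H.deleteEdges {s(u, v)}).Adj (x.2 : α) (y.2 : α)) ∨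
    ((y.1 : ℕ) = ((x.1 : ℕ) + 1) % k ∧ (y.2 : α) = u ∧
      (H.deleteEdges {s(u, v)}).Adj (x.2 : α) v)

/-- For a 2-connected graph `H` with an edge `uv`, the cycle of `k ≥ 2` copies of
`H⁻ = H − uv` contains `H` as a minor. -/
theorem cycleOfCopies_hasMinor (H : SimpleGraph α) [Fintype α]
    (h2 : TwoConnected H) (u v : α) (huv : H.Adj u v) (k : ℕ) (hk : 2 ≤ k) :
    HasMinor (cycleOfCopies H u v k) H := by
  obtain ⟨hcard, hconn, hdel⟩ := h2
  haveI : NeZero k := ⟨by omega⟩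
  have hne : u ≠ v := huv.ne
  set H' := H.deleteEdges {s(u, v)} with hH'
  set C := cycleOfCopies H u v k with hC
  have hCa : ∀ x y : Fin k × {a : α // a ≠ v}, C.Adj x y ↔ x ≠ y ∧
      (((x.1 = y.1 ∧ H'.Adj (x.2 : α) (y.2 : α)) ∨
        ((y.1 : ℕ) = ((x.1 : ℕ) + 1) % k ∧ (y.2 : α) = u ∧ H'.Adj (x.2 : α) v)) ∨
       ((y.1 = x.1 ∧ H'.Adj (y.2 : α) (x.2 : α)) ∨
        ((x.1 : ℕ) = ((y.1 : ℕ) + 1) % k ∧ (x.2 : α) = u ∧ H'.Adj (y.2 : α) v))) := by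
    intro x y
    rw [hC, cycleOfCopies, fromRel_adj]
  -- H' adjacency from H adjacency when not the uv edge
  have hadj' : ∀ a b : α, H.Adj a b → (a ≠ u ∨ b ≠ v) → (a ≠ v ∨ b ≠ u) → H'.Adj a b := by
    intro a b hab h1 h2
    rw [hH', deleteEdges_adj]
    refine ⟨hab, ?_⟩
    simp only [Set.mem_singleton_iff, Sym2.eq_iff]
    tauto
  -- a neighbor a₀ of v distinct from u (and v)
  obtain ⟨a₀, ha₀u, ha₀v, ha₀⟩ : ∃ a₀ : α, a₀ ≠ u ∧ a₀ ≠ v ∧ H.Adj a₀ v := by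
    have hvu : v ≠ u := hne.symm
    have hex : ∃ w : α, w ≠ u ∧ w ≠ v := by
      classical
      by_contra hcon
      push_neg at hcon
      have hsub : (Finset.univ : Finset α) ⊆ {u, v} := fun w _ => by
        by_cases h : w = u
        · simp [h]
        · simp [hcon w h]
      have h1 := Finset.card_le_card hsub
      rw [Finset.card_univ] at h1
      have h2 : ({u, v} : Finset α).card ≤ 2 := (Finset.card_insert_le _ _).trans (by simp)
      omega
    obtain ⟨w, hwu, hwv⟩ := hex
    have hreach : ((H.induce {w | w ≠ u}).Reachable ⟨v, hvu⟩ ⟨w, hwu⟩) :=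
      (hdel u).preconnected _ _
    obtain ⟨p⟩ := hreach
    cases p with
    | nil => exact (hwv rfl).elim
    | cons h q =>
      rename_i b
      have hb : H.Adj v (b : α) := by simpa using h
      exact ⟨b, b.2, hb.ne', hb.symm⟩
  have ha₀' : H'.Adj a₀ v := hadj' a₀ v ha₀ (Or.inl ha₀u) (Or.inr hne.symm)
  -- notation
  set u' : {a : α // a ≠ v} := ⟨u, hne⟩ with hu'
  set a₀' : {a : α // a ≠ v} := ⟨a₀, ha₀v⟩ with ha₀''
  have hne0 : ∀ i : Fin k, (i : ℕ) ≠ 0 → i ≠ 0 := by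
    intro i h hi
    exact h (by rw [hi]; simp)
  -- within-copy edges
  have hsame : ∀ (i : Fin k) (a b : {x : α // x ≠ v}), H'.Adj (a : α) (b : α) →
      C.Adj (i, a) (i, b) := by
    intro i a b hab
    rw [hCa]
    refine ⟨?_, Or.inl (Or.inl ⟨rfl, hab⟩)⟩
    intro hEq
    exact hab.ne (congrArg (fun p => (p.2 : α)) hEq)
  -- cross edges
  have hcross : ∀ (i j : Fin k) (a : {x : α // x ≠ v}), ((j : ℕ) = ((i : ℕ) + 1) % k) →
      H'.Adj (a : α) v → C.Adj (i, a) (j, u') := by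
    intro i j a hj hav
    rw [hCa]
    refine ⟨?_, Or.inl (Or.inr ⟨hj, rfl, hav⟩)⟩
    intro hEq
    have h1 : i = j := congrArg Prod.fst hEq
    rw [← h1] at hj
    have hik := i.isLt
    rcases Nat.lt_or_ge ((i : ℕ) + 1) k with h | h
    · rw [Nat.mod_eq_of_lt h] at hj; omega
    · have : (i : ℕ) + 1 = k := by omega
      rw [this, Nat.mod_self] at hj
      omega
  -- the big set for v
  set Vv : Set (Fin k × {a : α // a ≠ v}) := {p | p.1 ≠ 0} with hVv
  set G' := C.induce Vv with hG'
  have h1k : 1 < k := by omega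
  have h1mem : ((⟨1, h1k⟩ : Fin k), u') ∈ Vv := hne0 _ (by simp)
  set base : ↥Vv := ⟨(⟨1, h1k⟩, u'), h1mem⟩ with hbase
  -- within-copy reachability in G'
  have hcopy : ∀ (i : Fin k) (hi : (i, u').1 ≠ 0) (a b : {x : α // x ≠ v})
      (ha : ((i, a) : Fin k × {x : α // x ≠ v}) ∈ Vv) (hb : (i, b) ∈ Vv),
      G'.Reachable ⟨(i, a), ha⟩ ⟨(i, b), hb⟩ := by
    intro i hi a b ha hb
    have hmem : ∀ c : {x : α // x ≠ v}, ((i, c) : Fin k × {x : α // x ≠ v}) ∈ Vv := fun c => ha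
    let f : (H.induce {w | w ≠ v}) →g G' :=
      ⟨fun c => ⟨(i, ⟨c.1, c.2⟩), hmem _⟩, by
        intro c d hcd
        have hcd' : H.Adj (c : α) (d : α) := hcd
        have : H'.Adj (c : α) (d : α) := hadj' _ _ hcd' (Or.inr d.2) (Or.inl c.2)
        exact hsame i ⟨c.1, c.2⟩ ⟨d.1, d.2⟩ this⟩
    have hr : (H.induce {w | w ≠ v}).Reachable ⟨a.1, a.2⟩ ⟨b.1, b.2⟩ :=
      (hdel v).preconnected _ _
    have := hr.map f
    convert this using 2
    all_goals rfl
  -- chain reachability to base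
  have hchain : ∀ (j : ℕ) (hj1 : 1 ≤ j) (hj : j < k)
      (hm : ((⟨j, hj⟩ : Fin k), u') ∈ Vv), G'.Reachable ⟨(⟨j, hj⟩, u'), hm⟩ base := by
    intro j hj1
    induction j, hj1 using Nat.le_induction with
    | base => intro hj hm; rfl
    | succ j hj1 ih =>
      intro hj hm
      have hjk : j < k := by omega
      have hmj : ((⟨j, hjk⟩ : Fin k), u') ∈ Vv := hne0 _ (by simp; omega)
      have hma : ((⟨j, hjk⟩ : Fin k), a₀') ∈ Vv := hmj
      have hedge : C.Adj (⟨j, hjk⟩, a₀') (⟨j + 1, hj⟩, u') := by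
        apply hcross
        · simp [Nat.mod_eq_of_lt hj]
        · exact ha₀'
      have hstep : G'.Adj ⟨(⟨j, hjk⟩, a₀'), hma⟩ ⟨(⟨j + 1, hj⟩, u'), hm⟩ := hedge
      exact (hstep.reachable.symm.trans (hcopy ⟨j, hjk⟩ hmj a₀' u' hma hmj)).trans
        (ih hjk hmj)
  -- Vv induces a connected subgraph
  have hVvconn : G'.Connected := by
    rw [connected_iff]
    refine ⟨?_, ⟨base⟩⟩
    have hall : ∀ x : ↥Vv, G'.Reachable x base := by
      rintro ⟨⟨i, a⟩, hx⟩
      have hiv : (i : ℕ) ≠ 0 := by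
        intro h0
        exact hx (by rw [hVv] at *; exact Fin.ext (by simpa using h0))
      have h1 : G'.Reachable ⟨(i, a), hx⟩ ⟨(i, u'), hx⟩ := hcopy i hx a u' hx hx
      have h2 : G'.Reachable ⟨(i, u'), hx⟩ base := by
        have := hchain (i : ℕ) (by omega) i.isLt (by exact hx)
        convert this using 3
      exact h1.trans h2
    intro x y
    exact (hall x).trans (hall y).symm
  -- the model
  classical
  refine ⟨fun h => if hv : h = v then Vv else {(0, ⟨h, hv⟩)}, ?_, ?_, ?_, ?_⟩
  · intro h
    by_cases hv : h = v
    · simp only [dif_pos hv]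
      exact ⟨_, h1mem⟩
    · simp only [dif_neg hv]
      exact ⟨_, rfl⟩
  · intro a b hab
    by_cases hav : a = v <;> by_cases hbv : b = v
    · exact absurd (hav.trans hbv.symm) hab
    · simp only [dif_pos hav, dif_neg hbv]
      rw [Set.disjoint_right]
      rintro p rfl
      simp [hVv]
    · simp only [dif_neg hav, dif_pos hbv]
      rw [Set.disjoint_left]
      rintro p rfl
      simp [hVv]
    · simp only [dif_neg hav, dif_neg hbv]
      rw [Set.disjoint_left]
      rintro p rfl hp
      simp only [Set.mem_singleton_iff, Prod.mk.injEq, Subtype.mk.injEq] at hp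
      exact hab hp.2
  · intro h
    have hind : ∀ (s t : Set (Fin k × {a : α // a ≠ v})), s = t →
        (C.induce t).Connected → (C.induce s).Connected := by
      rintro s t rfl hc
      exact hc
    by_cases hv : h = v
    · exact hind _ _ (dif_pos hv) hVvconn
    · apply hind _ _ (dif_neg hv)
      rw [connected_iff]
      refine ⟨?_, ⟨⟨_, rfl⟩⟩⟩
      intro x y
      have : x = y := Subtype.ext (x.2.trans y.2.symm)
      rw [this]
  · intro a b hab
    by_cases hav : a = v <;> by_cases hbv : b = v
    · exact absurd (hav.trans hbv.symm) hab.ne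
    · -- a = v, b ≠ v
      have hbva : H.Adj b v := hav ▸ hab.symm
      by_cases hbu : b = u
      · have hk1 : k - 1 < k := by omega
        have hm : ((⟨k - 1, hk1⟩ : Fin k), a₀') ∈ Vv := hne0 _ (by simp; omega)
        refine ⟨(⟨k - 1, hk1⟩, a₀'), by simp only [dif_pos hav]; exact hm,
          (0, ⟨b, hbv⟩), by simp only [dif_neg hbv]; rfl, ?_⟩
        have hbb : (⟨b, hbv⟩ : {x : α // x ≠ v}) = u' := Subtype.ext hbu
        rw [hbb]
        apply hcross
        · have hkk : (k - 1) + 1 = k := by omega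
          simp [hkk, Nat.mod_self]
        · exact ha₀'
      · refine ⟨(⟨1, h1k⟩, u'), by simp only [dif_pos hav]; exact h1mem,
          (0, ⟨b, hbv⟩), by simp only [dif_neg hbv]; rfl, ?_⟩
        refine (hcross 0 ⟨1, h1k⟩ ⟨b, hbv⟩ ?_ ?_).symm
        · simp [Nat.mod_eq_of_lt h1k]
        · exact hadj' b v hbva (Or.inl hbu) (Or.inl hbv)
    · -- b = v, a ≠ v
      have hava : H.Adj a v := hbv ▸ hab
      by_cases hau : a = u
      · have hk1 : k - 1 < k := by omega
        have hm : ((⟨k - 1, hk1⟩ : Fin k), a₀') ∈ Vv := hne0 _ (by simp; omega)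
        refine ⟨(0, ⟨a, hav⟩), by simp only [dif_neg hav]; rfl,
          (⟨k - 1, hk1⟩, a₀'), by simp only [dif_pos hbv]; exact hm, ?_⟩
        have haa : (⟨a, hav⟩ : {x : α // x ≠ v}) = u' := Subtype.ext hau
        rw [haa]
        refine (hcross ⟨k - 1, hk1⟩ 0 a₀' ?_ ha₀').symm
        have hkk : (k - 1) + 1 = k := by omega
        simp [hkk, Nat.mod_self]
      · refine ⟨(0, ⟨a, hav⟩), by simp only [dif_neg hav]; rfl,
          (⟨1, h1k⟩, u'), by simp only [dif_pos hbv]; exact h1mem, ?_⟩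
        refine hcross 0 ⟨1, h1k⟩ ⟨a, hav⟩ ?_ ?_
        · simp [Nat.mod_eq_of_lt h1k]
        · exact hadj' a v hava (Or.inl hau) (Or.inl hav)
    · -- neither
      refine ⟨(0, ⟨a, hav⟩), by simp only [dif_neg hav]; rfl,
        (0, ⟨b, hbv⟩), by simp only [dif_neg hbv]; rfl, ?_⟩
      exact hsame 0 _ _ (hadj' a b hab (Or.inr hbv) (Or.inl hav))
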